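/- Let n ≥ 2 be an integer and ε > 0. The symmetric function g : ℝ^n → ℝ defined by g(x_1, …, x_n) := Σ_{i=1}^{n} x_1 ⋯ x_{i−1} · f_G(x_i) · x_{i+1} ⋯ x_n satisfies |D_n g(x_1, …, x_{n+1})| ≤ ε |x_1| ⋯ |x_{n−1}| (|x_n| + |x_{n+1}|) for all x_1, …, x_{n+1} ∈ ℝ, but for every δ > 0 there is NO symmetric n-additive mapping a : ℝ^n → ℝ with |g(x_1, …, x_n) − a(x_1, …, x_n)| ≤ δ |x_1| ⋯ |x_n| for all x_1, …, x_n ∈ ℝ. -/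

import Mathlib

/-- Gajda's function `ζ`. -/
noncomputable def zeta (ε : ℝ) (x : ℝ) : ℝ :=
  if 1 ≤ x then ε / 6 else if -1 < x then ε / 6 * x else -(ε / 6)

/-- Gajda's function `f_G x = ∑ₖ 2⁻ᵏ ζ(2ᵏ x)`. -/
noncomputable def fG (ε : ℝ) (x : ℝ) : ℝ := ∑' k : ℕ, zeta ε (2 ^ k * x) / 2 ^ k

/-- The Cauchy difference operator `D_n` for a function of `n = m + 1` variables. -/
def Dop {S B : Type*} [AddCommSemigroup S] [AddCommGroup B] (m : ℕ)
    (g : (Fin (m + 1) → S) → B) (z : Fin (m + 2) → S) : B :=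
  g (Function.update (fun i : Fin (m + 1) => z i.castSucc) (Fin.last m)
      (z (Fin.castSucc (Fin.last m)) + z (Fin.last (m + 1))))
    - g (fun i : Fin (m + 1) => z i.castSucc)
    - g (Function.update (fun i : Fin (m + 1) => z i.castSucc) (Fin.last m)
      (z (Fin.last (m + 1))))


lemma zeta_abs_le {ε : ℝ} (hε : 0 ≤ ε) (x : ℝ) : |zeta ε x| ≤ ε / 6 := by
  unfold zeta
  split_ifs with h1 h2
  · rw [abs_of_nonneg (by linarith)]
  · rw [abs_mul]
    calc |ε/6| * |x| ≤ (ε/6) * 1 := by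
          apply mul_le_mul (le_of_eq (abs_of_nonneg (by linarith))) ?_ (abs_nonneg _) (by linarith)
          rw [abs_le]; constructor <;> [linarith; linarith [not_le.mp h1]]
      _ = ε/6 := mul_one _
  · rw [abs_neg, abs_of_nonneg (by linarith)]

lemma zeta_nonneg {ε : ℝ} (hε : 0 ≤ ε) {x : ℝ} (hx : 0 ≤ x) : 0 ≤ zeta ε x := by
  unfold zeta
  split_ifs with h1 h2
  · linarith
  · positivity
  · exfalso; linarith

lemma zeta_linear (ε : ℝ) {x : ℝ} (hx : |x| < 1) : zeta ε x = ε / 6 * x := by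
  rw [abs_lt] at hx
  unfold zeta
  rw [if_neg (by linarith), if_pos hx.1]

lemma summable_zeta {ε : ℝ} (hε : 0 ≤ ε) (x : ℝ) :
    Summable (fun k : ℕ => zeta ε (2 ^ k * x) / 2 ^ k) := by
  apply Summable.of_norm_bounded (g := fun k : ℕ => (ε / 6) * (1/2) ^ k)
  · exact (summable_geometric_of_lt_one (by norm_num) (by norm_num)).mul_left _
  · intro k
    rw [Real.norm_eq_abs, abs_div, abs_of_nonneg (by positivity : (0:ℝ) ≤ 2 ^ k)]
    rw [div_le_iff₀ (by positivity)]
    calc |zeta ε (2 ^ k * x)| ≤ ε / 6 := zeta_abs_le hε _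
      _ = ε / 6 * (1/2)^k * 2^k := by rw [mul_assoc, one_div, inv_pow, inv_mul_cancel₀ (by positivity), mul_one]

lemma tsum_half : ∑' k : ℕ, ((1:ℝ)/2) ^ k = 2 := by
  rw [tsum_geometric_of_lt_one (by norm_num) (by norm_num)]; norm_num

set_option maxHeartbeats 1000000 in
lemma fG_abs_le {ε : ℝ} (hε : 0 ≤ ε) (x : ℝ) : |fG ε x| ≤ ε / 3 := by
  have hsum := summable_zeta hε x
  have habs : ∀ k : ℕ, |zeta ε (2 ^ k * x) / 2 ^ k| = |zeta ε (2 ^ k * x)| / 2 ^ k :=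
    fun k => by rw [abs_div, abs_of_nonneg (by positivity : (0:ℝ) ≤ 2 ^ k)]
  have hns : Summable fun k : ℕ => ‖zeta ε (2 ^ k * x) / 2 ^ k‖ := by
    simpa only [Real.norm_eq_abs] using hsum.abs
  calc |fG ε x| ≤ ∑' k : ℕ, |zeta ε (2 ^ k * x)| / 2 ^ k := by
        simpa only [Real.norm_eq_abs, habs, fG] using norm_tsum_le_tsum_norm hns
    _ ≤ ∑' k : ℕ, (ε / 6) * (1/2) ^ k := by
        apply Summable.tsum_le_tsum _ (by simpa only [habs] using hsum.abs)
          ((summable_geometric_of_lt_one (by norm_num) (by norm_num)).mul_left _)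
        intro k
        rw [div_le_iff₀ (by positivity : (0:ℝ) < 2 ^ k)]
        calc |zeta ε (2 ^ k * x)| ≤ ε / 6 := zeta_abs_le hε _
          _ = ε / 6 * (1/2)^k * 2^k := by rw [mul_assoc, one_div, inv_pow, inv_mul_cancel₀ (by positivity), mul_one]
    _ = ε / 6 * 2 := by rw [tsum_mul_left, tsum_half]
    _ = ε / 3 := by ring


set_option maxHeartbeats 1000000 in
lemma fG_lower {ε : ℝ} (hε : 0 ≤ ε) (N : ℕ) :
    (N : ℝ) * (ε / 6) * ((2:ℝ) ^ N)⁻¹ ≤ fG ε (((2:ℝ) ^ N)⁻¹) := by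
  set x : ℝ := ((2:ℝ)^N)⁻¹ with hx
  have hsum := summable_zeta hε x
  have h1 : ∑ k ∈ Finset.range N, zeta ε (2 ^ k * x) / 2 ^ k ≤ fG ε x := by
    apply Summable.sum_le_tsum _ _ hsum
    intro k _
    exact div_nonneg (zeta_nonneg hε (by positivity)) (by positivity)
  have h2 : ∀ k ∈ Finset.range N, zeta ε (2 ^ k * x) / 2 ^ k = ε / 6 * x := by
    intro k hk
    have hk' : k < N := Finset.mem_range.mp hk
    have harg : |2 ^ k * x| < 1 := by
      rw [abs_of_pos (by positivity), hx, mul_inv_lt_iff₀ (by positivity), one_mul]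
      exact pow_lt_pow_right₀ (by norm_num) hk'
    rw [zeta_linear ε harg]
    field_simp
  calc (N : ℝ) * (ε / 6) * x = ∑ _k ∈ Finset.range N, ε / 6 * x := by
        rw [Finset.sum_const, Finset.card_range, nsmul_eq_mul]; ring
    _ = ∑ k ∈ Finset.range N, zeta ε (2 ^ k * x) / 2 ^ k := (Finset.sum_congr rfl h2).symm
    _ ≤ fG ε x := h1


lemma half_pow (k : ℕ) : (1:ℝ)/2 ^ k = (1/2) ^ k := by
  rw [one_div, one_div, inv_pow]

set_option maxHeartbeats 1000000 in
lemma abs_tsum_le_of_bound (f : ℕ → ℝ) (c : ℝ) (hc : 0 ≤ c)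
    (hf : ∀ k, |f k| ≤ c / 2 ^ k) (hs : Summable f) : |∑' k, f k| ≤ 2 * c := by
  have heq : ∀ k : ℕ, c / 2 ^ k = c * (1/2) ^ k := fun k => by
    rw [div_eq_mul_inv, one_div, inv_pow]
  have hb : Summable (fun k : ℕ => c * (1/2) ^ k) :=
    (summable_geometric_of_lt_one (by norm_num) (by norm_num)).mul_left _
  have hfa : Summable (fun k => |f k|) :=
    Summable.of_nonneg_of_le (fun k => abs_nonneg _)
      (fun k => (hf k).trans_eq (heq k)) hb
  have hfa' : Summable fun k => ‖f k‖ := by simpa only [Real.norm_eq_abs] using hfa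
  have h1 : |∑' k, f k| ≤ ∑' k, |f k| := by
    simpa only [Real.norm_eq_abs] using norm_tsum_le_tsum_norm hfa' 
  refine h1.trans ?_
  calc ∑' k, |f k| ≤ ∑' k : ℕ, c * (1/2) ^ k :=
        Summable.tsum_le_tsum (fun k => (hf k).trans_eq (heq k)) hfa hb
    _ = c * 2 := by rw [tsum_mul_left, tsum_half]
    _ = 2 * c := by ring

lemma fG_zero (ε : ℝ) : fG ε 0 = 0 := by
  unfold fG
  convert tsum_zero with k
  rw [mul_zero, zeta_linear ε (by norm_num), mul_zero, zero_div]

set_option maxHeartbeats 1000000 in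
lemma fG_cauchy {ε : ℝ} (hε : 0 ≤ ε) (u v : ℝ) :
    |fG ε (u + v) - fG ε u - fG ε v| ≤ ε * (|u| + |v|) := by
  set d : ℕ → ℝ := fun k =>
    (zeta ε (2 ^ k * (u + v)) - zeta ε (2 ^ k * u) - zeta ε (2 ^ k * v)) / 2 ^ k with hd
  have hsu := summable_zeta hε u
  have hsv := summable_zeta hε v
  have hsuv := summable_zeta hε (u + v)
  have hsd : Summable d := by
    have : d = fun k => (zeta ε (2 ^ k * (u+v)) / 2 ^ k - zeta ε (2 ^ k * u) / 2 ^ k)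
        - zeta ε (2 ^ k * v) / 2 ^ k := by
      funext k; rw [hd]; ring
    rw [this]
    exact (hsuv.sub hsu).sub hsv
  have hdiff : fG ε (u + v) - fG ε u - fG ε v = ∑' k, d k := by
    unfold fG
    rw [← Summable.tsum_sub hsuv hsu, ← Summable.tsum_sub (hsuv.sub hsu) hsv]
    congr 1; funext k; rw [hd]; ring
  have hdbound : ∀ k : ℕ, |d k| ≤ (ε / 2) / 2 ^ k := by
    intro k
    rw [hd, abs_div, abs_of_nonneg (by positivity : (0:ℝ) ≤ 2 ^ k)]
    apply div_le_div_of_nonneg_right _ (by positivity)  -- might be wrong name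
    calc |zeta ε (2 ^ k * (u+v)) - zeta ε (2 ^ k * u) - zeta ε (2 ^ k * v)|
        ≤ |zeta ε (2 ^ k * (u+v))| + |zeta ε (2 ^ k * u)| + |zeta ε (2 ^ k * v)| := by
          exact (abs_sub _ _).trans (by gcongr; exact abs_sub _ _)
      _ ≤ ε / 6 + ε / 6 + ε / 6 := by
          gcongr <;> exact zeta_abs_le hε _
      _ = ε / 2 := by ring
  rw [hdiff]
  rcases le_or_gt 1 (|u| + |v|) with hs | hs
  · -- large case
    have := abs_tsum_le_of_bound d (ε/2) (by linarith) hdbound hsd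
    calc |∑' k, d k| ≤ 2 * (ε/2) := this
      _ = ε * 1 := by ring
      _ ≤ ε * (|u| + |v|) := by nlinarith
  rcases eq_or_lt_of_le (by positivity : (0:ℝ) ≤ |u| + |v|) with hs0 | hs0
  · -- u = v = 0
    have hu : u = 0 := by
      have := abs_nonneg u; have := abs_nonneg v
      have : |u| = 0 := by linarith
      exact abs_eq_zero.mp this
    have hv : v = 0 := by
      have := abs_nonneg u; have := abs_nonneg v
      have : |v| = 0 := by linarith
      exact abs_eq_zero.mp this
    have : ∀ k, d k = 0 := by
      intro k
      rw [hd]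
      simp only [hu, hv, add_zero, mul_zero, zeta_linear ε (x := 0) (by norm_num)]
      ring
    simp only [this, tsum_zero, abs_zero]
    positivity
  · -- main case 0 < s < 1
    set s := |u| + |v| with hsdef
    classical
    have hex : ∃ n : ℕ, 1 ≤ 2 ^ n * s := by
      obtain ⟨n, hn⟩ := pow_unbounded_of_one_lt (1/s) (by norm_num : (1:ℝ) < 2)
      exact ⟨n, by rw [div_lt_iff₀ hs0] at hn; linarith⟩
    set N := Nat.find hex with hN
    have hNspec : 1 ≤ 2 ^ N * s := Nat.find_spec hex
    have hNmin : ∀ k < N, 2 ^ k * s < 1 := fun k hk =>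
      lt_of_not_ge (Nat.find_min hex hk)
    have hdzero : ∀ k < N, d k = 0 := by
      intro k hk
      have hks := hNmin k hk
      have h2k : (0:ℝ) < 2 ^ k := by positivity
      have hu1 : |2 ^ k * u| < 1 := by
        rw [abs_mul, abs_of_pos h2k]
        have := abs_nonneg v
        nlinarith
      have hv1 : |2 ^ k * v| < 1 := by
        rw [abs_mul, abs_of_pos h2k]
        have := abs_nonneg u
        nlinarith
      have huv1 : |2 ^ k * (u + v)| < 1 := by
        rw [abs_mul, abs_of_pos h2k]
        have := abs_add_le u v
        nlinarith [abs_nonneg (u+v)]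
      rw [hd]
      simp only
      rw [zeta_linear ε hu1, zeta_linear ε hv1, zeta_linear ε huv1]
      ring
    have hsplit : ∑' k, d k = ∑' k : ℕ, d (k + N) := by
      rw [← Summable.sum_add_tsum_nat_add N hsd, Finset.sum_eq_zero (fun k hk =>
        hdzero k (Finset.mem_range.mp hk)), zero_add]
    rw [hsplit]
    have hshift : ∀ k : ℕ, |d (k + N)| ≤ ((ε/2) / 2 ^ N) / 2 ^ k := by
      intro k
      refine (hdbound (k + N)).trans_eq ?_
      rw [pow_add, div_div, div_div]
      ring
    have := abs_tsum_le_of_bound (fun k => d (k + N)) ((ε/2)/2^N)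
      (by positivity) hshift ((summable_nat_add_iff N).mpr hsd)
    refine this.trans ?_
    have h2N : (0:ℝ) < 2 ^ N := by positivity
    calc 2 * (ε / 2 / 2 ^ N) = ε / 2 ^ N := by field_simp
      _ ≤ ε * s := by
        rw [div_le_iff₀ h2N]
        nlinarith

-- product over erase last = product over castSucc
lemma prod_erase_last {n : ℕ} (f : Fin (n + 1) → ℝ) :
    ∏ j ∈ Finset.univ.erase (Fin.last n), f j = ∏ i : Fin n, f i.castSucc := by
  rw [show (Finset.univ.erase (Fin.last n)) = Finset.image Fin.castSucc Finset.univ by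
    ext j
    simp only [Finset.mem_erase, Finset.mem_univ, and_true, Finset.mem_image, true_and]
    constructor
    · intro h
      exact Fin.exists_castSucc_eq.2 h
    · rintro ⟨i, rfl⟩
      exact Fin.ne_of_lt (Fin.castSucc_lt_last i)]
  exact Finset.prod_image (fun a _ b _ h => Fin.castSucc_injective n h)

-- the key expansion of g at an updated last coordinate
lemma g_update {m : ℕ} (ε : ℝ) (g : (Fin (m + 2) → ℝ) → ℝ)
    (hg : ∀ x : Fin (m + 2) → ℝ,
      g x = ∑ i, fG ε (x i) * ∏ j ∈ Finset.univ.erase i, x j)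
    (x : Fin (m + 2) → ℝ) (t : ℝ) :
    g (Function.update x (Fin.last (m + 1)) t)
      = fG ε t * (∏ j ∈ Finset.univ.erase (Fin.last (m + 1)), x j)
        + (∑ i ∈ Finset.univ.erase (Fin.last (m + 1)),
            fG ε (x i) * ∏ j ∈ (Finset.univ.erase i).erase (Fin.last (m + 1)), x j) * t := by
  set L := Fin.last (m + 1)
  set x' := Function.update x L t with hx'
  rw [hg]
  rw [← Finset.add_sum_erase Finset.univ _ (Finset.mem_univ L)]
  have hxL : x' L = t := Function.update_self _ _ _
  have hxo : ∀ j : Fin (m + 2), j ≠ L → x' j = x j := fun j hj =>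
    Function.update_of_ne hj _ _
  congr 1
  · rw [hxL]
    congr 1
    exact Finset.prod_congr rfl (fun j hj => hxo j (Finset.ne_of_mem_erase hj))
  · rw [Finset.sum_mul]
    apply Finset.sum_congr rfl
    intro i hi
    have hiL : i ≠ L := Finset.ne_of_mem_erase hi
    have hLi : L ∈ Finset.univ.erase i := Finset.mem_erase.mpr ⟨(Ne.symm hiL), Finset.mem_univ L⟩
    rw [hxo i hiL, ← Finset.mul_prod_erase _ x' hLi, hxL]
    have : ∏ j ∈ (Finset.univ.erase i).erase L, x' j
        = ∏ j ∈ (Finset.univ.erase i).erase L, x j :=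
      Finset.prod_congr rfl (fun j hj => hxo j (Finset.ne_of_mem_erase hj))
    rw [this]
    ring

/-- **Second example (case `r = 1`).** For `n = m + 2 ≥ 2`, the symmetric function
`g(x₁, …, x_n) = ∑ᵢ x₁ ⋯ x_{i-1} f_G(xᵢ) x_{i+1} ⋯ x_n` satisfies
`|D_n g (x₁, …, x_{n+1})| ≤ ε |x₁| ⋯ |x_{n-1}| (|x_n| + |x_{n+1}|)`, but for every `δ > 0`
there is no symmetric `n`-additive `a` with `|g x - a x| ≤ δ |x₁| ⋯ |x_n|` for all `x`. -/
theorem stmt9 (m : ℕ) (ε : ℝ) (hε : 0 < ε)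
    (g : (Fin (m + 2) → ℝ) → ℝ)
    (hg : ∀ x : Fin (m + 2) → ℝ,
      g x = ∑ i, fG ε (x i) * ∏ j ∈ Finset.univ.erase i, x j) :
    (∀ z : Fin (m + 3) → ℝ,
      |Dop (m + 1) g z| ≤ ε * (∏ i : Fin (m + 1), |z i.castSucc.castSucc|) *
        (|z (Fin.castSucc (Fin.last (m + 1)))| + |z (Fin.last (m + 2))|)) ∧
    (∀ δ : ℝ, 0 < δ →
      ¬ ∃ a : (Fin (m + 2) → ℝ) → ℝ,
        (∀ (x : Fin (m + 2) → ℝ) (σ : Equiv.Perm (Fin (m + 2))), a (x ∘ σ) = a x) ∧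
        (∀ (x : Fin (m + 2) → ℝ) (i : Fin (m + 2)) (u v : ℝ),
          a (Function.update x i (u + v))
            = a (Function.update x i u) + a (Function.update x i v)) ∧
        (∀ x : Fin (m + 2) → ℝ, |g x - a x| ≤ δ * ∏ i, |x i|)) := by
  constructor
  · -- Part 1
    intro z
    set x : Fin (m + 2) → ℝ := fun i => z i.castSucc with hx
    set L := Fin.last (m + 1) with hL
    set u := z (Fin.castSucc L) with hu
    set v := z (Fin.last (m + 2)) with hv
    set P := ∏ j ∈ Finset.univ.erase L, x j with hP
    have hxL : x L = u := rfl
    have hgx : g x = g (Function.update x L u) := by rw [← hxL, Function.update_eq_self]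
    have key : Dop (m + 1) g z = (fG ε (u + v) - fG ε u - fG ε v) * P := by
      show g (Function.update x L (u + v)) - g x - g (Function.update x L v) = _
      rw [hgx, g_update ε g hg, g_update ε g hg, g_update ε g hg]
      ring
    rw [key, abs_mul]
    have h1 : |fG ε (u + v) - fG ε u - fG ε v| ≤ ε * (|u| + |v|) := fG_cauchy hε.le u v
    have h2 : |P| = ∏ i : Fin (m + 1), |z i.castSucc.castSucc| := by
      rw [hP, Finset.abs_prod, prod_erase_last (fun j => |x j|)]
    rw [h2]
    calc |fG ε (u + v) - fG ε u - fG ε v| * ∏ i : Fin (m + 1), |z i.castSucc.castSucc|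
        ≤ (ε * (|u| + |v|)) * ∏ i : Fin (m + 1), |z i.castSucc.castSucc| := by
          apply mul_le_mul_of_nonneg_right h1 (Finset.prod_nonneg fun i _ => abs_nonneg _)
      _ = ε * (∏ i : Fin (m + 1), |z i.castSucc.castSucc|) * (|u| + |v|) := by ring
  · -- Part 2
    rintro δ hδ ⟨a, -, hadd, hclose⟩
    set L := Fin.last (m + 1) with hL
    set x₀ : Fin (m + 2) → ℝ := fun _ => 1 with hx₀
    set C := ∑ i ∈ Finset.univ.erase L,
        fG ε (x₀ i) * ∏ j ∈ (Finset.univ.erase i).erase L, x₀ j with hC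
    set ψ : ℝ → ℝ := fun t => a (Function.update x₀ L t) - C * t with hψ
    have hP0 : ∏ j ∈ Finset.univ.erase L, x₀ j = 1 := Finset.prod_const_one
    have hgup : ∀ t : ℝ, g (Function.update x₀ L t) = fG ε t + C * t := by
      intro t
      rw [g_update ε g hg, hP0, mul_one]
    have hprod : ∀ t : ℝ, (∏ i, |Function.update x₀ L t i|) = |t| := by
      intro t
      rw [Fin.prod_univ_castSucc]
      have h1 : ∀ i : Fin (m + 1), |Function.update x₀ L t i.castSucc| = 1 := by
        intro i
        rw [Function.update_of_ne (Fin.ne_of_lt (Fin.castSucc_lt_last i))]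
        simp [hx₀]
      rw [Finset.prod_congr rfl (fun i _ => h1 i), Finset.prod_const_one, one_mul,
        Function.update_self]
    have hb : ∀ t : ℝ, |fG ε t - ψ t| ≤ δ * |t| := by
      intro t
      have := hclose (Function.update x₀ L t)
      rw [hgup t, hprod t] at this
      convert this using 2
      rw [hψ]
      ring
    have hψadd : ∀ p q : ℝ, ψ (p + q) = ψ p + ψ q := by
      intro p q
      rw [hψ]
      simp only
      rw [hadd x₀ L p q]
      ring
    have hhalf : ∀ t : ℝ, ψ t = 2 * ψ (t / 2) := by
      intro t
      have : ψ (t / 2 + t / 2) = ψ (t/2) + ψ (t/2) := hψadd _ _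
      rw [show t / 2 + t / 2 = t by ring] at this
      rw [this]; ring
    have hpow : ∀ N : ℕ, ψ 1 = 2 ^ N * ψ (((2:ℝ) ^ N)⁻¹) := by
      intro N
      induction N with
      | zero => simp
      | succ N ih =>
        rw [ih, hhalf (((2:ℝ) ^ N)⁻¹)]
        rw [show ((2:ℝ) ^ N)⁻¹ / 2 = ((2:ℝ) ^ (N + 1))⁻¹ by rw [pow_succ]; field_simp]
        ring
    obtain ⟨N, hN⟩ := exists_nat_gt ((δ + ψ 1) * 6 / ε)
    set t : ℝ := ((2:ℝ) ^ N)⁻¹ with ht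
    have htpos : 0 < t := by positivity
    have h1 : fG ε t - ψ t ≤ δ * t := by
      have := hb t
      rw [abs_of_pos htpos] at this
      exact (abs_le.mp this).2
    have h2 : (N : ℝ) * (ε / 6) * t ≤ fG ε t := fG_lower hε.le N
    have h3 : ψ t = ψ 1 * t := by
      have := hpow N
      have h2N : (0:ℝ) < 2 ^ N := by positivity
      field_simp [ht] at this ⊢
      rw [this, ht, one_div, mul_comm, ← mul_assoc, inv_mul_cancel₀ h2N.ne', one_mul]
    rw [div_lt_iff₀ hε] at hN
    nlinarith [mul_pos htpos hε]
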